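/- Let λ ∈ ℂ and define on Polynomial ℂ the operators J⁺ = M_{X²}∘D − λ·M_X, J⁻ = D, J⁰ = M_X∘D − (λ/2)·id. For every k ∈ ℕ, the ℂ-subspace of End(Polynomial ℂ) spanned by all compositions of at most k elements of {J⁺, J⁻, J⁰} (the empty composition being the identity) has dimension exactly (k+1)². -/

import Mathlib

noncomputable section

open Polynomial

/-- The formal derivative as a `ℂ`-linear endomorphism of `Polynomial ℂ`. -/
def D1 : Module.End ℂ (Polynomial ℂ) := Polynomial.derivative

/-- Multiplication by a polynomial `g` as an endomorphism. -/
def M1 (g : Polynomial ℂ) : Module.End ℂ (Polynomial ℂ) := LinearMap.mulLeft ℂ g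

/-- The module `𝒫ₙ`, the span of `Xⁱ` for `0 ≤ i ≤ n`. -/
def Pmod (n : ℕ) : Submodule ℂ (Polynomial ℂ) :=
  Submodule.span ℂ {p : Polynomial ℂ | ∃ i ≤ n, p = X ^ i}

/-- `J⁺ = M_{X²}∘D − n·M_X`. -/
def Jp (n : ℕ) : Module.End ℂ (Polynomial ℂ) := M1 (X ^ 2) * D1 - (n : ℂ) • M1 X

/-- `J⁻ = D`. -/
def Jm : Module.End ℂ (Polynomial ℂ) := D1

/-- `J⁰ = M_X∘D − (n/2)·id`. -/
def J0 (n : ℕ) : Module.End ℂ (Polynomial ℂ) := M1 X * D1 - ((n : ℂ) / 2) • 1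

/-- All compositions (products) of at most `k` elements of `S`; the empty
composition is the identity. -/
def prodsLE (k : ℕ) (S : Set (Module.End ℂ (Polynomial ℂ))) :
    Set (Module.End ℂ (Polynomial ℂ)) :=
  {T | ∃ l : List (Module.End ℂ (Polynomial ℂ)),
    l.length ≤ k ∧ (∀ a ∈ l, a ∈ S) ∧ l.prod = T}

namespace SL2
variable (lam : ℂ)

def Eop : Module.End ℂ (Polynomial ℂ) := M1 (X ^ 2) * D1 - lam • M1 X
def Fop : Module.End ℂ (Polynomial ℂ) := D1
def Hop : Module.End ℂ (Polynomial ℂ) := M1 X * D1 - (lam / 2) • 1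

def cas : ℂ := (lam ^ 2 + 2 * lam) / 4

lemma end_ext {f g : Module.End ℂ (Polynomial ℂ)} (h : ∀ n : ℕ, f (X ^ n) = g (X ^ n)) :
    f = g := by
  apply Polynomial.lhom_ext'
  intro n
  apply LinearMap.ext_ring
  simpa [Polynomial.monomial_one_right_eq_X_pow] using h n

lemma Fop_Xn (n : ℕ) : Fop (X ^ n : Polynomial ℂ) = (n : ℂ) • X ^ (n - 1) := by
  simp [Fop, D1, derivative_X_pow, smul_eq_C_mul]

lemma Eop_Xn (n : ℕ) : Eop lam (X ^ n : Polynomial ℂ) = ((n : ℂ) - lam) • X ^ (n + 1) := by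
  simp only [Eop, LinearMap.sub_apply, Module.End.mul_apply, LinearMap.smul_apply, M1, D1,
    LinearMap.mulLeft_apply, derivative_X_pow, smul_eq_C_mul]
  cases n with
  | zero => simp
  | succ m =>
    rw [Nat.add_sub_cancel, C_sub]
    push_cast
    ring

lemma Hop_Xn (n : ℕ) : Hop lam (X ^ n : Polynomial ℂ) = ((n : ℂ) - lam / 2) • X ^ n := by
  simp only [Hop, LinearMap.sub_apply, Module.End.mul_apply, LinearMap.smul_apply, M1, D1,
    LinearMap.mulLeft_apply, Module.End.one_apply, derivative_X_pow, smul_eq_C_mul]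
  cases n with
  | zero => simp
  | succ m =>
    rw [Nat.add_sub_cancel, C_sub]
    push_cast
    ring

lemma id1 : Hop lam * Eop lam = Eop lam * Hop lam + Eop lam := by
  apply end_ext; intro n
  simp only [Module.End.mul_apply, LinearMap.add_apply, Eop_Xn, Hop_Xn, map_smul,
    Nat.add_sub_cancel]
  push_cast
  module

lemma id2 : Hop lam * Fop = Fop * Hop lam - Fop := by
  apply end_ext; intro n
  simp only [Module.End.mul_apply, LinearMap.sub_apply, Eop_Xn, Fop_Xn, Hop_Xn, map_smul]
  cases n with
  | zero => push_cast; module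
  | succ m => push_cast [Nat.add_sub_cancel]; module

lemma id3 : Eop lam * Fop = Hop lam ^ 2 - Hop lam - cas lam • 1 := by
  apply end_ext; intro n
  simp only [Module.End.mul_apply, LinearMap.sub_apply, LinearMap.smul_apply, Module.End.one_apply,
    pow_two, Eop_Xn, Fop_Xn, Hop_Xn, map_smul, cas]
  cases n with
  | zero => push_cast; module
  | succ m => push_cast [Nat.add_sub_cancel]; module

lemma id4 : Fop * Eop lam = Hop lam ^ 2 + Hop lam - cas lam • 1 := by
  apply end_ext; intro n
  simp only [Module.End.mul_apply, LinearMap.sub_apply, LinearMap.add_apply, LinearMap.smul_apply,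
    Module.End.one_apply, pow_two, Eop_Xn, Fop_Xn, Hop_Xn, map_smul, Nat.add_sub_cancel, cas]
  push_cast
  module

end SL2

namespace SL2
variable (lam : ℂ)
open Finset

lemma Hpow_Xn (m n : ℕ) : (Hop lam ^ m) (X ^ n : Polynomial ℂ)
    = ((n : ℂ) - lam / 2) ^ m • X ^ n := by
  induction m with
  | zero => simp
  | succ m ih =>
    rw [pow_succ, Module.End.mul_apply, Hop_Xn, map_smul, ih, smul_smul, pow_succ]
    ring_nf

lemma Epow_Xn (i n : ℕ) : (Eop lam ^ i) (X ^ n : Polynomial ℂ)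
    = (∏ t ∈ range i, ((n : ℂ) + t - lam)) • X ^ (n + i) := by
  induction i generalizing n with
  | zero => simp
  | succ i ih =>
    rw [pow_succ, Module.End.mul_apply, Eop_Xn, map_smul, ih, Finset.prod_range_succ',
      smul_smul]
    have h1 : ∀ t : ℕ, (((n+1 : ℕ) : ℂ) + t - lam) = (n : ℂ) + (t+1 : ℕ) - lam := by
      intro t; push_cast; ring
    rw [Finset.prod_congr rfl (fun t _ => h1 t), show n + 1 + i = n + (i+1) by omega]
    congr 1
    push_cast
    ring

lemma Fpow_Xn (j n : ℕ) : (Fop ^ j) (X ^ n : Polynomial ℂ)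
    = (∏ t ∈ range j, ((n : ℂ) - t)) • X ^ (n - j) := by
  induction j generalizing n with
  | zero => simp
  | succ j ih =>
    rw [pow_succ, Module.End.mul_apply, Fop_Xn, map_smul, ih, Finset.prod_range_succ',
      smul_smul]
    rcases Nat.eq_zero_or_pos n with rfl | hn
    · simp
    · have h1 : ∀ t : ℕ, (((n-1 : ℕ) : ℂ) - t) = (n : ℂ) - (t+1 : ℕ) := by
        intro t; push_cast [Nat.cast_sub hn]; ring
      rw [Finset.prod_congr rfl (fun t _ => h1 t), show n - 1 - j = n - (j+1) by omega]
      congr 1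
      push_cast
      ring

lemma key1 (i m : ℕ) : Eop lam * (Eop lam ^ i * Hop lam ^ m)
    = Eop lam ^ (i+1) * Hop lam ^ m := by
  rw [← mul_assoc, ← pow_succ']

lemma key4 (j m : ℕ) : Fop * (Fop ^ j * Hop lam ^ m) = Fop ^ (j+1) * Hop lam ^ m := by
  rw [← mul_assoc, ← pow_succ']

lemma key2 (i m : ℕ) : Hop lam * (Eop lam ^ i * Hop lam ^ m)
    = Eop lam ^ i * Hop lam ^ (m+1) + (i : ℂ) • (Eop lam ^ i * Hop lam ^ m) := by
  apply end_ext; intro n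
  simp only [Module.End.mul_apply, LinearMap.add_apply, LinearMap.smul_apply, Hpow_Xn, Epow_Xn,
    Hop_Xn, map_smul]
  push_cast
  module

lemma key5 (j m : ℕ) : Hop lam * (Fop ^ j * Hop lam ^ m)
    = Fop ^ j * Hop lam ^ (m+1) - (j : ℂ) • (Fop ^ j * Hop lam ^ m) := by
  apply end_ext; intro n
  simp only [Module.End.mul_apply, LinearMap.sub_apply, LinearMap.smul_apply, Hpow_Xn, Fpow_Xn,
    Hop_Xn, map_smul]
  rcases le_or_gt j n with h | h
  · rw [Nat.cast_sub h]
    module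
  · rw [Finset.prod_eq_zero (Finset.mem_range.mpr h) (by simp)]
    module

lemma key3 (i m : ℕ) : Fop * (Eop lam ^ (i+1) * Hop lam ^ m)
    = Eop lam ^ i * Hop lam ^ (m+2) + ((2*i+1 : ℕ) : ℂ) • (Eop lam ^ i * Hop lam ^ (m+1))
      + ((i : ℂ)^2 + i - cas lam) • (Eop lam ^ i * Hop lam ^ m) := by
  apply end_ext; intro n
  simp only [Module.End.mul_apply, LinearMap.add_apply, LinearMap.smul_apply, Hpow_Xn, Epow_Xn,
    Fop_Xn, map_smul, Finset.prod_range_succ, cas]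
  rw [show n + (i + 1) - 1 = n + i by omega]
  push_cast
  module

lemma key6 (j m : ℕ) : Eop lam * (Fop ^ (j+1) * Hop lam ^ m)
    = Fop ^ j * Hop lam ^ (m+2) - ((2*j+1 : ℕ) : ℂ) • (Fop ^ j * Hop lam ^ (m+1))
      + ((j : ℂ)^2 + j - cas lam) • (Fop ^ j * Hop lam ^ m) := by
  apply end_ext; intro n
  simp only [Module.End.mul_apply, LinearMap.add_apply, LinearMap.sub_apply, LinearMap.smul_apply,
    Hpow_Xn, Fpow_Xn, Eop_Xn, map_smul, Finset.prod_range_succ, cas]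
  rcases le_or_gt (j+1) n with h | h
  · rw [show n - (j+1) + 1 = n - j by omega, Nat.cast_sub h]
    push_cast
    module
  · rcases eq_or_lt_of_le (by omega : n ≤ j) with rfl | h2
    · rw [show n - (n+1) = 0 by omega, show n - n = 0 by omega, show ((n:ℂ) - n) = 0 by ring]
      push_cast
      module
    · rw [Finset.prod_eq_zero (Finset.mem_range.mpr h2) (by simp)]
      push_cast
      module

end SL2

namespace SL2
variable (lam : ℂ)
open Finset

def Sgen : Set (Module.End ℂ (Polynomial ℂ)) := {Eop lam, Fop, Hop lam}

def Bs (k : ℕ) : Set (Module.End ℂ (Polynomial ℂ)) :=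
  {T | ∃ i m, i + m ≤ k ∧ (T = Eop lam ^ i * Hop lam ^ m ∨ T = Fop ^ i * Hop lam ^ m)}

def W (k : ℕ) : Submodule ℂ (Module.End ℂ (Polynomial ℂ)) := Submodule.span ℂ (Bs lam k)

lemma Bs_mono {k k' : ℕ} (h : k ≤ k') : Bs lam k ⊆ Bs lam k' := by
  rintro T ⟨i, m, hle, hT⟩
  exact ⟨i, m, hle.trans h, hT⟩

lemma W_mono {k k' : ℕ} (h : k ≤ k') : W lam k ≤ W lam k' :=
  Submodule.span_mono (Bs_mono lam h)

lemma mem_W_of_mem_Bs {k : ℕ} {T : Module.End ℂ (Polynomial ℂ)} (h : T ∈ Bs lam k) :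
    T ∈ W lam k := Submodule.subset_span h

lemma mul_basis_mem {k : ℕ} {s T : Module.End ℂ (Polynomial ℂ)} (hs : s ∈ Sgen lam)
    (hT : T ∈ Bs lam k) : s * T ∈ W lam (k + 1) := by
  obtain ⟨i, m, hle, hT | hT⟩ := hT <;> subst hT <;>
    rcases hs with rfl | rfl | rfl
  · -- E * E^i H^m
    rw [key1]
    exact mem_W_of_mem_Bs lam ⟨i+1, m, by omega, Or.inl rfl⟩
  · -- F * E^i H^m
    cases i with
    | zero =>
      rw [pow_zero, one_mul, show Fop * Hop lam ^ m = Fop ^ 1 * Hop lam ^ m by rw [pow_one]]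
      exact mem_W_of_mem_Bs lam ⟨1, m, by omega, Or.inr rfl⟩
    | succ i =>
      rw [key3]
      refine Submodule.add_mem _ (Submodule.add_mem _ ?_ ?_) ?_
      · exact mem_W_of_mem_Bs lam ⟨i, m+2, by omega, Or.inl rfl⟩
      · exact Submodule.smul_mem _ _ (mem_W_of_mem_Bs lam ⟨i, m+1, by omega, Or.inl rfl⟩)
      · exact Submodule.smul_mem _ _ (mem_W_of_mem_Bs lam ⟨i, m, by omega, Or.inl rfl⟩)
  · -- H * E^i H^m
    rw [key2]
    refine Submodule.add_mem _ ?_ ?_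
    · exact mem_W_of_mem_Bs lam ⟨i, m+1, by omega, Or.inl rfl⟩
    · exact Submodule.smul_mem _ _ (mem_W_of_mem_Bs lam ⟨i, m, by omega, Or.inl rfl⟩)
  · -- E * F^i H^m
    cases i with
    | zero =>
      rw [pow_zero, one_mul, show Eop lam * Hop lam ^ m = Eop lam ^ 1 * Hop lam ^ m by
        rw [pow_one]]
      exact mem_W_of_mem_Bs lam ⟨1, m, by omega, Or.inl rfl⟩
    | succ j =>
      rw [key6]
      refine Submodule.add_mem _ (Submodule.sub_mem _ ?_ ?_) ?_
      · exact mem_W_of_mem_Bs lam ⟨j, m+2, by omega, Or.inr rfl⟩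
      · exact Submodule.smul_mem _ _ (mem_W_of_mem_Bs lam ⟨j, m+1, by omega, Or.inr rfl⟩)
      · exact Submodule.smul_mem _ _ (mem_W_of_mem_Bs lam ⟨j, m, by omega, Or.inr rfl⟩)
  · -- F * F^i H^m
    rw [key4]
    exact mem_W_of_mem_Bs lam ⟨i+1, m, by omega, Or.inr rfl⟩
  · -- H * F^i H^m
    rw [key5]
    refine Submodule.sub_mem _ ?_ ?_
    · exact mem_W_of_mem_Bs lam ⟨i, m+1, by omega, Or.inr rfl⟩
    · exact Submodule.smul_mem _ _ (mem_W_of_mem_Bs lam ⟨i, m, by omega, Or.inr rfl⟩)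

lemma mul_W_mem {k : ℕ} {s T : Module.End ℂ (Polynomial ℂ)} (hs : s ∈ Sgen lam)
    (hT : T ∈ W lam k) : s * T ∈ W lam (k + 1) := by
  induction hT using Submodule.span_induction with
  | mem x hx => exact mul_basis_mem lam hs hx
  | zero => simpa using Submodule.zero_mem _
  | add x y hx hy ihx ihy => rw [mul_add]; exact Submodule.add_mem _ ihx ihy
  | smul c x hx ihx => rw [mul_smul_comm]; exact Submodule.smul_mem _ _ ihx

lemma prod_mem_W (l : List (Module.End ℂ (Polynomial ℂ))) (hl : ∀ a ∈ l, a ∈ Sgen lam) :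
    l.prod ∈ W lam l.length := by
  induction l with
  | nil =>
    refine mem_W_of_mem_Bs lam ⟨0, 0, le_refl _, Or.inl ?_⟩
    simp
  | cons s l ih =>
    rw [List.prod_cons, List.length_cons]
    exact mul_W_mem lam (hl s (List.mem_cons_self))
      (ih (fun a ha => hl a (List.mem_cons_of_mem s ha)))

end SL2

namespace SL2
variable (lam : ℂ)

lemma span_prodsLE_eq (k : ℕ) :
    Submodule.span ℂ (prodsLE k (Sgen lam)) = W lam k := by
  apply le_antisymm
  · rw [Submodule.span_le]
    rintro T ⟨l, hlen, hmem, rfl⟩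
    exact W_mono lam hlen (prod_mem_W lam l hmem)
  · rw [W, Submodule.span_le]
    rintro T ⟨i, m, hle, hT | hT⟩ <;> subst hT <;> apply Submodule.subset_span
    · refine ⟨List.replicate i (Eop lam) ++ List.replicate m (Hop lam), ?_, ?_, ?_⟩
      · simpa using hle
      · intro a ha
        rcases List.mem_append.mp ha with h | h <;>
          rw [List.eq_of_mem_replicate h] <;> simp [Sgen]
      · rw [List.prod_append, List.prod_replicate, List.prod_replicate]
    · refine ⟨List.replicate i Fop ++ List.replicate m (Hop lam), ?_, ?_, ?_⟩
      · simpa using hle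
      · intro a ha
        rcases List.mem_append.mp ha with h | h <;>
          rw [List.eq_of_mem_replicate h] <;> simp [Sgen]
      · rw [List.prod_append, List.prod_replicate, List.prod_replicate]

end SL2

namespace SL2
variable (lam : ℂ)
open Finset

def Gop : ℤ × ℕ → Module.End ℂ (Polynomial ℂ) := fun p =>
  (if 0 ≤ p.1 then Eop lam ^ p.1.toNat else Fop ^ p.1.natAbs) * Hop lam ^ p.2

def Qp : ℤ × ℕ → Polynomial ℂ := fun p =>
  (if 0 ≤ p.1 then ∏ t ∈ range p.1.toNat, (X + C ((t : ℂ) - lam))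
    else ∏ t ∈ range p.1.natAbs, (X - C (t : ℂ))) * (X - C (lam / 2)) ^ p.2

lemma Qp_head_monic (r : ℤ) :
    (if 0 ≤ r then ∏ t ∈ range r.toNat, ((X : Polynomial ℂ) + C ((t : ℂ) - lam))
      else ∏ t ∈ range r.natAbs, (X - C (t : ℂ))).Monic := by
  split
  · exact monic_prod_of_monic _ _ fun t _ => monic_X_add_C _
  · exact monic_prod_of_monic _ _ fun t _ => monic_X_sub_C _

lemma Qp_monic (p : ℤ × ℕ) : (Qp lam p).Monic :=
  (Qp_head_monic lam p.1).mul ((monic_X_sub_C _).pow _)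

lemma Qp_natDegree (p : ℤ × ℕ) : (Qp lam p).natDegree = p.1.natAbs + p.2 := by
  rcases p with ⟨r, m⟩
  dsimp only [Qp]
  rw [Polynomial.Monic.natDegree_mul (Qp_head_monic lam r) ((monic_X_sub_C _).pow _),
    natDegree_pow, natDegree_X_sub_C, mul_one]
  congr 1
  split
  · rw [natDegree_prod_of_monic _ _ fun t _ => monic_X_add_C _]
    simp only [natDegree_X_add_C]
    rw [Finset.sum_const, smul_eq_mul, mul_one, Finset.card_range]
    omega
  · rw [natDegree_prod_of_monic _ _ fun t _ => monic_X_sub_C _]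
    simp only [natDegree_X_sub_C]
    rw [Finset.sum_const, smul_eq_mul, mul_one, Finset.card_range]

lemma Gop_Xn (p : ℤ × ℕ) (n : ℕ) (h : p.1.natAbs ≤ n) :
    Gop lam p (X ^ n : Polynomial ℂ) = (Qp lam p).eval (n : ℂ) • X ^ (n + p.1).toNat := by
  rcases p with ⟨r, m⟩
  by_cases hr : 0 ≤ r
  · simp only [Gop, Qp, if_pos hr, Module.End.mul_apply, Hpow_Xn, map_smul, Epow_Xn, smul_smul,
      eval_mul, eval_pow, eval_prod, eval_add, eval_sub, eval_X, eval_C]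
    rw [show (n + r).toNat = n + r.toNat by omega, mul_comm]
    congr 2
    exact Finset.prod_congr rfl fun t _ => by ring
  · simp only [Gop, Qp, if_neg hr, Module.End.mul_apply, Hpow_Xn, map_smul, Fpow_Xn, smul_smul,
      eval_mul, eval_pow, eval_prod, eval_sub, eval_X, eval_C]
    rw [show (n + r).toNat = n - r.natAbs by omega, mul_comm]

lemma Gop_li : LinearIndependent ℂ (Gop lam) := by
  rw [linearIndependent_iff]
  intro c hc
  obtain ⟨N, hNle⟩ : ∃ N : ℕ, ∀ p ∈ c.support, p.1.natAbs ≤ N :=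
    ⟨c.support.sup (fun q => q.1.natAbs), fun p hp => Finset.le_sup (f := fun q : ℤ × ℕ => q.1.natAbs) hp⟩
  have hev : ∀ n : ℕ, N ≤ n →
      ∑ p ∈ c.support, c p • ((Qp lam p).eval (n : ℂ) • (X : Polynomial ℂ) ^ (n + p.1).toNat)
        = 0 := by
    intro n hn
    have h0 := congrArg (fun T : Module.End ℂ (Polynomial ℂ) => T (X ^ n)) hc
    simp only [Finsupp.linearCombination_apply, Finsupp.sum, LinearMap.zero_apply] at h0
    rw [LinearMap.sum_apply] at h0
    simp only [LinearMap.smul_apply] at h0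
    rw [← h0]
    refine Finset.sum_congr rfl fun p hp => ?_
    rw [Gop_Xn lam p n (le_trans (hNle p hp) hn)]
  have hR : ∀ r : ℤ, (∑ p ∈ c.support.filter (fun p => p.1 = r), c p • Qp lam p) = 0 := by
    intro r
    apply Polynomial.eq_zero_of_infinite_isRoot
    apply Set.Infinite.mono
      (s := (fun n : ℕ => (n : ℂ)) '' Set.Ici (max N r.natAbs))
    · rintro _ ⟨n, hn, rfl⟩
      have hNn : N ≤ n := le_trans (le_max_left _ _) hn
      have hrn : r.natAbs ≤ n := le_trans (le_max_right _ _) hn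
      have h2 := congrArg (fun q => Polynomial.coeff q (n + r).toNat) (hev n hNn)
      simp only [finset_sum_coeff, coeff_smul, coeff_X_pow, Polynomial.coeff_zero,
        smul_eq_mul] at h2
      simp only [Set.mem_setOf_eq, IsRoot.def, eval_finset_sum, eval_smul, smul_eq_mul]
      have h3 : ∀ p ∈ c.support,
          (if p.1 = r then c p * eval (n : ℂ) (Qp lam p) else 0)
            = c p * (eval (n : ℂ) (Qp lam p)
                * if ((n : ℤ) + r).toNat = ((n : ℤ) + p.1).toNat then 1 else 0) := by
        intro p hp
        have hpn : p.1.natAbs ≤ n := le_trans (hNle p hp) hNn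
        by_cases hpr : p.1 = r
        · rw [if_pos hpr, if_pos (by omega), mul_one]
        · rw [if_neg hpr, if_neg (by omega), mul_zero, mul_zero]
      rw [Finset.sum_filter, Finset.sum_congr rfl h3, h2]
    · apply Set.Infinite.image
      · exact fun a _ b _ hab => Nat.cast_injective hab
      · exact Set.Ici_infinite _
  ext p0
  rw [Finsupp.coe_zero, Pi.zero_apply]
  by_contra hne
  have hp0 : p0 ∈ c.support := Finsupp.mem_support_iff.mpr hne
  set Fr := c.support.filter (fun p => p.1 = p0.1) with hFr
  have hp0F : p0 ∈ Fr := Finset.mem_filter.mpr ⟨hp0, rfl⟩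
  obtain ⟨pm, hpmF, hpm⟩ := Finset.exists_mem_eq_sup Fr ⟨p0, hp0F⟩ (fun p => p.2)
  have hpm1 : pm.1 = p0.1 := (Finset.mem_filter.mp hpmF).2
  have hcoeff := congrArg
    (fun q => Polynomial.coeff q (Fr.sup (fun p => p.2) + p0.1.natAbs)) (hR p0.1)
  simp only [finset_sum_coeff, coeff_smul, Polynomial.coeff_zero, smul_eq_mul] at hcoeff
  rw [Finset.sum_eq_single pm (fun p hpF hpne => ?_) (fun habs => absurd hpmF habs)] at hcoeff
  · -- main term gives c pm = 0, contradiction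
    have hdeg : (Qp lam pm).natDegree = Fr.sup (fun p => p.2) + p0.1.natAbs := by
      rw [Qp_natDegree, hpm1, ← hpm]
      omega
    rw [← hdeg, Polynomial.coeff_natDegree, Polynomial.Monic.leadingCoeff (Qp_monic lam pm),
      mul_one] at hcoeff
    exact (Finsupp.mem_support_iff.mp (Finset.mem_filter.mp hpmF).1) hcoeff
  · -- other terms vanish
    have hp1 : p.1 = p0.1 := (Finset.mem_filter.mp hpF).2
    have hple : p.2 ≤ Fr.sup (fun q => q.2) := Finset.le_sup hpF
    have hplt : p.2 < Fr.sup (fun q => q.2) := by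
      rcases lt_or_eq_of_le hple with h | h
      · exact h
      · exfalso
        apply hpne
        have : p = (p0.1, Fr.sup (fun q => q.2)) := Prod.ext hp1 h
        have hpmeq : pm = (p0.1, Fr.sup (fun q => q.2)) := Prod.ext hpm1 hpm.symm
        rw [this, hpmeq]
    rw [Polynomial.coeff_eq_zero_of_natDegree_lt (by rw [Qp_natDegree, hp1]; omega), mul_zero]

end SL2

namespace SL2
variable (lam : ℂ)
open Finset

def tset (k : ℕ) : Finset (ℤ × ℕ) :=
  (Finset.range (k+1) ×ˢ Finset.range (k+1)).image
    (fun ab => ((ab.1 : ℤ) - (ab.2 : ℤ), min ab.1 ab.2))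

lemma tset_card (k : ℕ) : (tset k).card = (k+1)^2 := by
  rw [tset, Finset.card_image_of_injective _ ?_, Finset.card_product, Finset.card_range, sq]
  rintro ⟨a, b⟩ ⟨a', b'⟩ h
  rw [Prod.ext_iff] at h ⊢
  obtain ⟨h1, h2⟩ := h
  dsimp at h1 h2 ⊢
  constructor <;> omega

lemma Bs_eq (k : ℕ) : Bs lam k = Gop lam '' ↑(tset k) := by
  ext T
  constructor
  · rintro ⟨i, m, hle, hT | hT⟩ <;> subst hT
    · refine ⟨((i : ℤ), m), ?_, ?_⟩
      · simp only [tset, Finset.coe_image, Set.mem_image, Finset.mem_coe,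
          Finset.mem_product, Finset.mem_range]
        exact ⟨(i + m, m), ⟨by omega, by omega⟩, by simp [Prod.ext_iff]; try omega⟩
      · simp only [Gop, if_pos (by omega : (0:ℤ) ≤ (i:ℤ)), Int.toNat_natCast]
    · rcases Nat.eq_zero_or_pos i with rfl | hi
      · refine ⟨((0 : ℤ), m), ?_, ?_⟩
        · simp only [tset, Finset.coe_image, Set.mem_image, Finset.mem_coe,
            Finset.mem_product, Finset.mem_range]
          exact ⟨(m, m), ⟨by omega, by omega⟩, by simp [Prod.ext_iff]⟩
        · simp only [Gop, if_pos (le_refl (0:ℤ)), Int.toNat_zero, pow_zero]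
      · refine ⟨(-(i : ℤ), m), ?_, ?_⟩
        · simp only [tset, Finset.coe_image, Set.mem_image, Finset.mem_coe,
            Finset.mem_product, Finset.mem_range]
          exact ⟨(m, i + m), ⟨by omega, by omega⟩, by simp [Prod.ext_iff]; try omega⟩
        · simp only [Gop, if_neg (by omega : ¬(0:ℤ) ≤ -(i:ℤ))]
          congr 2
          omega
  · rintro ⟨⟨r, m⟩, hmem, rfl⟩
    simp only [tset, Finset.coe_image, Set.mem_image, Finset.mem_coe,
      Finset.mem_product, Finset.mem_range] at hmem
    obtain ⟨⟨a, b⟩, ⟨ha, hb⟩, hab⟩ := hmem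
    rw [Prod.ext_iff] at hab
    dsimp at hab
    obtain ⟨hab1, hab2⟩ := hab
    by_cases hr : 0 ≤ r
    · refine ⟨r.toNat, m, by omega, Or.inl ?_⟩
      simp only [Gop, if_pos hr]
    · refine ⟨r.natAbs, m, by omega, Or.inr ?_⟩
      simp only [Gop, if_neg hr]

lemma W_finrank (k : ℕ) : Module.finrank ℂ (W lam k) = (k+1)^2 := by
  rw [W, Bs_eq, Set.image_eq_range]
  have hli : LinearIndependent ℂ (fun x : ↥(↑(tset k) : Set (ℤ × ℕ)) => Gop lam ↑x) :=
    (Gop_li lam).comp _ Subtype.val_injective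
  rw [finrank_span_eq_card hli]
  rw [← tset_card k]
  exact Fintype.card_coe _

end SL2


theorem stmt2 (lam : ℂ) (k : ℕ) :
    Module.finrank ℂ ↥(Submodule.span ℂ (prodsLE k
      {M1 (X ^ 2) * D1 - lam • M1 X, D1, M1 X * D1 - (lam / 2) • 1})) = (k + 1) ^ 2 := by
  have hset : ({M1 (X ^ 2) * D1 - lam • M1 X, D1, M1 X * D1 - (lam / 2) • 1}
      : Set (Module.End ℂ (Polynomial ℂ))) = SL2.Sgen lam := rfl
  rw [hset, SL2.span_prodsLE_eq, SL2.W_finrank]
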